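/- Let A and B be finite pseudocomplemented distributive lattices and let h : A → B be a surjective homomorphism. Then for every b ∈ B: b is join-irreducible in B if and only if there exists a join-irreducible element a of A such that h(a) = b and b is different from the join of the set {h(c) : c join-irreducible in A and c < a}. -/

import Mathlib

/-- An element of a lattice with a least element is join-irreducible if it is nonzero and
`a = b ⊔ c` implies `a = b` or `a = c`. -/
def JoinIrr {A : Type*} [Lattice A] [OrderBot A] (a : A) : Prop :=
  a ≠ ⊥ ∧ ∀ b c : A, a = b ⊔ c → a = b ∨ a = c

/-- A join-irreducible element equal to a finite sup must equal one of the terms. -/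
theorem JoinIrr.eq_of_sup {B : Type*} [Lattice B] [OrderBot B] {b : B}
    (hb : JoinIrr b) : ∀ s : Finset B, b = s.sup id → ∃ x ∈ s, b = x := by
  classical
  intro s
  induction s using Finset.induction with
  | empty => intro hsup; simp at hsup; exact absurd hsup hb.1
  | insert a s hnotmem ih =>
    intro hsup
    rw [Finset.sup_insert] at hsup
    rcases hb.2 _ _ hsup with h1 | h2
    · exact ⟨a, Finset.mem_insert_self a s, h1⟩
    · obtain ⟨x, hx, hbx⟩ := ih h2
      exact ⟨x, Finset.mem_insert_of_mem hx, hbx⟩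

open Classical in
/-- Every element of a finite lattice is below (in fact equal to) the sup of the
join-irreducibles below it. -/
theorem le_sup_joinIrr {A : Type*} [Lattice A] [OrderBot A] [Fintype A] (z : A) :
    z ≤ (Finset.univ.filter (fun c => JoinIrr c ∧ c ≤ z)).sup id := by
  induction z using WellFoundedLT.induction with
  | ind z ih =>
    by_cases hz : z = ⊥
    · simp [hz]
    by_cases hJ : JoinIrr z
    · exact Finset.le_sup (f := id) (by simp [hJ])
    · rw [JoinIrr, not_and] at hJ
      have := hJ hz
      push_neg at this
      obtain ⟨u, v, huv, hu, hv⟩ := this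
      have hule : u < z := lt_of_le_of_ne (huv ▸ le_sup_left) (Ne.symm hu)
      have hvle : v < z := lt_of_le_of_ne (huv ▸ le_sup_right) (Ne.symm hv)
      have hsub : ∀ w : A, w ≤ z →
          (Finset.univ.filter (fun c => JoinIrr c ∧ c ≤ w)).sup id ≤
          (Finset.univ.filter (fun c => JoinIrr c ∧ c ≤ z)).sup id := by
        intro w hw
        apply Finset.sup_mono
        intro c hc
        simp only [Finset.mem_filter, Finset.mem_univ, true_and] at hc ⊢
        exact ⟨hc.1, hc.2.trans hw⟩
      calc z = u ⊔ v := huv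
        _ ≤ _ := sup_le ((ih u hule).trans (hsub u hule.le))
                        ((ih v hvle).trans (hsub v hvle.le))

theorem map_finsetSup {A B : Type*} [Lattice A] [OrderBot A] [Lattice B] [OrderBot B]
    [DecidableEq B] (h : A → B) (hbot : h ⊥ = ⊥) (hsup : ∀ x y, h (x ⊔ y) = h x ⊔ h y)
    (s : Finset A) : h (s.sup id) = (s.image h).sup id := by
  classical
  induction s using Finset.induction with
  | empty => simpa using hbot
  | insert a s hnotmem ih => simp [hsup, ih]

theorem joinIrr_iff_image_of_joinIrr
    {A B : Type*} [DistribLattice A] [BoundedOrder A] [Finite A]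
    [DistribLattice B] [BoundedOrder B] [Finite B]
    (negA : A → A) (hA : ∀ x y : A, x ≤ negA y ↔ x ⊓ y = ⊥)
    (negB : B → B) (hB : ∀ x y : B, x ≤ negB y ↔ x ⊓ y = ⊥)
    (h : A → B) (hsurj : Function.Surjective h)
    (hinf : ∀ x y, h (x ⊓ y) = h x ⊓ h y) (hsup : ∀ x y, h (x ⊔ y) = h x ⊔ h y)
    (hnegh : ∀ x, h (negA x) = negB (h x)) (hbot : h ⊥ = ⊥) (htop : h ⊤ = ⊤)
    (b : B) :
    JoinIrr b ↔ ∃ a : A, JoinIrr a ∧ h a = b ∧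
      b ≠ (Set.toFinite {d : B | ∃ c : A, JoinIrr c ∧ c < a ∧ h c = d}).toFinset.sup id := by
  classical
  have := Fintype.ofFinite A
  have := Fintype.ofFinite B
  have hmono : ∀ x y : A, x ≤ y → h x ≤ h y := by
    intro x y hxy
    have : h x ⊔ h y = h y := by rw [← hsup, sup_eq_right.mpr hxy]
    exact le_of_sup_eq this
  -- the element z maps onto h z viewed as sup of images of join-irreducibles below z
  have key : ∀ z : A, h z =
      ((Finset.univ.filter (fun c => JoinIrr c ∧ c ≤ z)).image h).sup id := by
    intro z
    have hle : z ≤ (Finset.univ.filter (fun c => JoinIrr c ∧ c ≤ z)).sup id :=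
      le_sup_joinIrr z
    have hge : (Finset.univ.filter (fun c => JoinIrr c ∧ c ≤ z)).sup id ≤ z := by
      apply Finset.sup_le
      intro c hc
      simp only [Finset.mem_filter] at hc
      exact hc.2.2
    have hz : z = (Finset.univ.filter (fun c => JoinIrr c ∧ c ≤ z)).sup id :=
      le_antisymm hle hge
    rw [hz, map_finsetSup h hbot hsup, ← hz]
  constructor
  · -- forward direction
    intro hb
    obtain ⟨x, hx⟩ := hsurj b
    -- there is at least one join-irreducible mapping to b
    have hex : ∃ a : A, JoinIrr a ∧ h a = b := by
      have := key x
      rw [hx] at this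
      obtain ⟨d, hd, hbd⟩ := hb.eq_of_sup _ this
      simp only [Finset.mem_image, Finset.mem_filter, Finset.mem_univ, true_and] at hd
      obtain ⟨c, ⟨hcJ, _⟩, hcd⟩ := hd
      exact ⟨c, hcJ, hcd ▸ hbd.symm⟩
    -- pick a minimal such join-irreducible
    set P : Finset A := Finset.univ.filter (fun a => JoinIrr a ∧ h a = b) with hP
    have hPne : P.Nonempty := by
      obtain ⟨a, ha1, ha2⟩ := hex
      exact ⟨a, by simp [hP, ha1, ha2]⟩
    obtain ⟨a, haP, hamin⟩ := P.exists_minimal hPne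
    simp only [hP, Finset.mem_filter, Finset.mem_univ, true_and] at haP
    refine ⟨a, haP.1, haP.2, ?_⟩
    intro hcontra
    obtain ⟨d, hd, hbd⟩ := hb.eq_of_sup _ hcontra
    rw [Set.Finite.mem_toFinset] at hd
    obtain ⟨c, hcJ, hca, hcd⟩ := hd
    have hcP : c ∈ P := by simp [hP, hcJ, hcd, hbd]
    exact (lt_irrefl a) (lt_of_le_of_lt (hamin hcP hca.le) hca)
  · -- backward direction
    rintro ⟨a, haJ, hab, hne⟩
    set T := (Set.toFinite {d : B | ∃ c : A, JoinIrr c ∧ c < a ∧ h c = d}).toFinset with hT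
    have hTle : T.sup id ≤ b := by
      apply Finset.sup_le
      intro d hd
      rw [hT, Set.Finite.mem_toFinset] at hd
      obtain ⟨c, _, hca, hcd⟩ := hd
      exact hcd ▸ hab ▸ hmono c a hca.le
    have hbne : b ≠ ⊥ := by
      intro hbbot
      apply hne
      rw [hbbot] at hTle ⊢
      exact (le_bot_iff.mp hTle).symm
    refine ⟨hbne, ?_⟩
    intro u v huv
    by_contra hcon
    push_neg at hcon
    obtain ⟨hbu, hbv⟩ := hcon
    obtain ⟨x, hxu⟩ := hsurj u
    obtain ⟨y, hyv⟩ := hsurj v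
    have hub : u ≤ b := huv ▸ le_sup_left
    have hvb : v ≤ b := huv ▸ le_sup_right
    set z := (x ⊓ a) ⊔ (y ⊓ a) with hz
    have hza : z ≤ a := sup_le inf_le_right inf_le_right
    have hhz : h z = b := by
      rw [hz, hsup, hinf, hinf, hxu, hyv, hab, inf_eq_left.mpr hub,
        inf_eq_left.mpr hvb, ← huv]
    have hzlt : z < a := by
      rcases lt_or_eq_of_le hza with hlt | heq
      · exact hlt
      · exfalso
        rcases haJ.2 _ _ heq.symm with h1 | h1
        · apply hbu
          rw [← hab, h1, hinf, hxu, hab, inf_eq_left.mpr hub]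
        · apply hbv
          rw [← hab, h1, hinf, hyv, hab, inf_eq_left.mpr hvb]
    -- b = h z ≤ sup T, combined with hTle gives b = sup T, contradiction
    apply hne
    refine le_antisymm ?_ hTle
    rw [← hhz, key z]
    apply Finset.sup_le
    intro d hd
    simp only [Finset.mem_image, Finset.mem_filter, Finset.mem_univ, true_and] at hd
    obtain ⟨c, ⟨hcJ, hcz⟩, hcd⟩ := hd
    apply Finset.le_sup (f := id)
    rw [hT, Set.Finite.mem_toFinset]
    exact ⟨c, hcJ, lt_of_le_of_lt hcz hzlt, hcd⟩
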